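/- Let X and Y be finite-dimensional real inner product spaces, let B ⊆ Y be a nonempty compact convex set with M_B := sup_{u ∈ B} ‖u‖, let h : Y → ℝ be a convex differentiable function with ∇h(y) ∈ B for all y ∈ Y, and let G : X → Y be continuously differentiable with DG Lipschitz continuous of constant L_G ≥ 0. Then the composition g := h ∘ G satisfies g(x) ≥ g(x̄) + ⟨∇g(x̄), x − x̄⟩ − (L_G · M_B / 2)·‖x − x̄‖² for all x, x̄ ∈ X. -/

import Mathlib

open scoped InnerProductSpace

theorem convex_grad_ineq {Y : Type*} [NormedAddCommGroup Y] [InnerProductSpace ℝ Y]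
    [CompleteSpace Y]
    (h : Y → ℝ) (hconv : ConvexOn ℝ Set.univ h) (u y z : Y)
    (hg : HasGradientAt h u y) : h y + ⟪u, z - y⟫_ℝ ≤ h z := by
  set A : ℝ →ᵃ[ℝ] Y := AffineMap.lineMap y z with hA
  have hψ : ConvexOn ℝ Set.univ (h ∘ A) := by
    have := hconv.comp_affineMap A
    simpa using this
  have hline : HasDerivAt (fun t : ℝ => A t) (z - y) 0 := by
    simp only [hA, AffineMap.coe_lineMap]
    have h1 := ((hasDerivAt_id (0:ℝ)).smul_const (z - y)).const_add y
    have heq : (fun t : ℝ => y + id t • (z - y)) = fun t : ℝ => t • (z -ᵥ y) +ᵥ y := by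
      funext t; simp [vsub_eq_sub, vadd_eq_add]; abel
    rw [heq] at h1; simpa using h1
  have hF : HasFDerivAt h (InnerProductSpace.toDual ℝ Y u) y :=
    hasGradientAt_iff_hasFDerivAt.mp hg
  have hd : HasDerivAt (h ∘ A) ⟪u, z - y⟫_ℝ 0 := by
    have h0 : A (0:ℝ) = y := by simp [hA]
    rw [← h0] at hF
    have := hF.comp_hasDerivAt (x := (0:ℝ)) hline
    simpa using this
  have := hψ.le_slope_of_hasDerivAt (Set.mem_univ (0:ℝ)) (Set.mem_univ (1:ℝ)) one_pos hd
  simp [slope_def_field, hA, AffineMap.lineMap_apply] at this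
  linarith [this]

theorem comp_lower_quadratic_bound
    {X Y : Type*} [NormedAddCommGroup X] [InnerProductSpace ℝ X] [FiniteDimensional ℝ X]
    [NormedAddCommGroup Y] [InnerProductSpace ℝ Y] [FiniteDimensional ℝ Y]
    (B : Set Y) (hBne : B.Nonempty) (hBcompact : IsCompact B) (hBconv : Convex ℝ B)
    (MB : ℝ) (hMB : MB = sSup ((fun u : Y => ‖u‖) '' B))
    (h : Y → ℝ) (hconv : ConvexOn ℝ Set.univ h)
    (gh : Y → Y) (hgrad : ∀ y, HasGradientAt h (gh y) y)
    (hghB : ∀ y, gh y ∈ B)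
    (G : X → Y) (G' : X → X →L[ℝ] Y)
    (hG' : ∀ x, HasFDerivAt G (G' x) x) (hG'cont : Continuous G')
    (LG : ℝ) (hLG : 0 ≤ LG)
    (hlip : ∀ x z : X, ‖G' x - G' z‖ ≤ LG * ‖x - z‖) :
    ∀ x xbar : X,
      h (G x) ≥ h (G xbar) + ⟪gradient (h ∘ G) xbar, x - xbar⟫_ℝ
        - LG * MB / 2 * ‖x - xbar‖ ^ 2 := by
  intro x xbar
  set d := x - xbar with hd
  set u := gh (G xbar) with hu
  -- bound on norms in B
  have hbdd : BddAbove ((fun u : Y => ‖u‖) '' B) :=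
    (hBcompact.image continuous_norm).bddAbove
  have hMBle : ‖u‖ ≤ MB := hMB ▸ le_csSup hbdd ⟨u, hghB _, rfl⟩
  have hMB0 : 0 ≤ MB := le_trans (norm_nonneg _) hMBle
  -- gradient of the composition
  have hFh : HasFDerivAt h (InnerProductSpace.toDual ℝ Y u) (G xbar) :=
    hasGradientAt_iff_hasFDerivAt.mp (hgrad (G xbar))
  have hFg : HasFDerivAt (h ∘ G)
      (((InnerProductSpace.toDual ℝ Y u) : Y →L[ℝ] ℝ).comp (G' xbar)) xbar :=
    hFh.comp xbar (hG' xbar)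
  have hgradg : ⟪gradient (h ∘ G) xbar, d⟫_ℝ = ⟪u, G' xbar d⟫_ℝ := by
    have := (hasFDerivAt_iff_hasGradientAt.mp hFg).gradient
    rw [this, InnerProductSpace.toDual_symm_apply]
    simp
  -- the quadratic bound on ⟪u, G x - G xbar⟫
  set C := LG * MB * ‖d‖ ^ 2 with hC
  set q : ℝ → ℝ := fun t => ⟪u, G (xbar + t • d)⟫_ℝ - t * ⟪u, G' xbar d⟫_ℝ + C / 2 * t ^ 2
    with hq
  have hqd : ∀ t : ℝ, HasDerivAt q
      (⟪u, G' (xbar + t • d) d⟫_ℝ - ⟪u, G' xbar d⟫_ℝ + C * t) t := by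
    intro t
    have hline : HasDerivAt (fun s : ℝ => xbar + s • d) d t := by
      simpa using ((hasDerivAt_id t).smul_const d).const_add xbar
    have h1 : HasDerivAt (fun s : ℝ => ⟪u, G (xbar + s • d)⟫_ℝ)
        ⟪u, G' (xbar + t • d) d⟫_ℝ t := by
      have hG := (hG' (xbar + t • d)).comp_hasDerivAt t hline
      have := (InnerProductSpace.toDual ℝ Y u).hasFDerivAt.comp_hasDerivAt t hG
      exact this
    have h2 : HasDerivAt (fun s : ℝ => s * ⟪u, G' xbar d⟫_ℝ) ⟪u, G' xbar d⟫_ℝ t := by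
      simpa using (hasDerivAt_id t).mul_const ⟪u, G' xbar d⟫_ℝ
    have h3 : HasDerivAt (fun s : ℝ => C / 2 * s ^ 2) (C * t) t := by
      have := (hasDerivAt_pow 2 t).const_mul (C / 2)
      exact this.congr_deriv (by norm_num; ring)
    exact (h1.sub h2).add h3
  have hmono : MonotoneOn q (Set.Icc 0 1) := by
    apply monotoneOn_of_deriv_nonneg (convex_Icc 0 1)
    · exact Continuous.continuousOn
        (continuous_iff_continuousAt.mpr fun t => (hqd t).continuousAt)
    · intro t ht
      exact (hqd t).differentiableAt.differentiableWithinAt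
    · intro t ht
      rw [interior_Icc] at ht
      rw [(hqd t).deriv]
      have hb : |⟪u, (G' (xbar + t • d) - G' xbar) d⟫_ℝ| ≤ C * t := by
        calc |⟪u, (G' (xbar + t • d) - G' xbar) d⟫_ℝ|
            ≤ ‖u‖ * ‖(G' (xbar + t • d) - G' xbar) d‖ := abs_real_inner_le_norm _ _
          _ ≤ MB * (‖G' (xbar + t • d) - G' xbar‖ * ‖d‖) :=
              mul_le_mul hMBle ((G' _ - G' xbar).le_opNorm d) (norm_nonneg _) hMB0
          _ ≤ MB * (LG * ‖(xbar + t • d) - xbar‖ * ‖d‖) := by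
              apply mul_le_mul_of_nonneg_left _ hMB0
              exact mul_le_mul_of_nonneg_right (hlip _ _) (norm_nonneg _)
          _ = C * t := by
              rw [hC]
              have : ‖(xbar + t • d) - xbar‖ = t * ‖d‖ := by
                simp [norm_smul, abs_of_pos ht.1]
              rw [this]; ring
      have hsplit : ⟪u, G' (xbar + t • d) d⟫_ℝ - ⟪u, G' xbar d⟫_ℝ
          = ⟪u, (G' (xbar + t • d) - G' xbar) d⟫_ℝ := by
        rw [← inner_sub_right]; simp
      rw [hsplit]
      nlinarith [abs_le.mp hb]
  have hq01 : q 0 ≤ q 1 := hmono (by norm_num) (by norm_num) zero_le_one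
  have hkey : ⟪u, G' xbar d⟫_ℝ - C / 2 ≤ ⟪u, G x - G xbar⟫_ℝ := by
    have h0 : q 0 = ⟪u, G xbar⟫_ℝ := by simp [hq]
    have h1 : q 1 = ⟪u, G x⟫_ℝ - ⟪u, G' xbar d⟫_ℝ + C / 2 := by
      simp [hq, hd]
    rw [h0, h1] at hq01
    rw [inner_sub_right]
    linarith
  have hcvx := convex_grad_ineq h hconv u (G xbar) (G x) (hgrad (G xbar))
  rw [hgradg]
  have hCC : LG * MB / 2 * ‖d‖ ^ 2 = C / 2 := by rw [hC]; ring
  linarith
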